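/- Let H = (V,E) be an intersection-closed, reduced hypergraph with L(H) ≤ d+1, and let n = |V|. Then ∑_{e ∈ E, e ≠ V} |e| ≤ n^d, and consequently ||H|| = ∑_{e∈E} |e| ≤ n^d + n. -/

import Mathlib

open Classical in
/-- intersection of a finite nonempty subfamily of an intersection-closed family is in it -/
lemma my_sInter_mem {α : Type*} {E : Set (Set α)} (hcl : ∀ a ∈ E, ∀ b ∈ E, a ∩ b ∈ E)
    {S : Set (Set α)} (hfin : S.Finite) : S.Nonempty → S ⊆ E → ⋂₀ S ∈ E := by
  refine Set.Finite.induction_on (motive := fun S _ => S.Nonempty → S ⊆ E → ⋂₀ S ∈ E) S hfin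
    (fun hne _ => absurd rfl hne.ne_empty) ?_
  intro a s ha hs IH _ hSE
  · rw [Set.sInter_insert]
    rcases s.eq_empty_or_nonempty with h | h
    · subst h; simpa using hSE (by simp)
    · exact hcl a (hSE (by simp)) _ (IH h (fun x hx => hSE (Set.mem_insert_of_mem _ hx)))


/-- prepend ∅ to a chain -/
lemma my_chain_prepend {α : Type*} {E : Set (Set α)} {d : ℕ}
    (hL : ∀ (l : ℕ) (c : Fin (l+1) → Set α),
      (∀ i, c i ∈ E) → (∀ i j, i < j → c i ⊂ c j) → l ≤ d+1)
    (h0 : (∅ : Set α) ∈ E) {l : ℕ} (c : Fin (l+1) → Set α) (hc : ∀ i, c i ∈ E)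
    (hmono : ∀ i j, i < j → c i ⊂ c j) (hne : ∀ i, (c i).Nonempty) : l + 1 ≤ d + 1 := by
  set c' : Fin (l+1+1) → Set α :=
    fun i => if h : (i : ℕ) = 0 then ∅ else c ⟨(i : ℕ) - 1, by omega⟩ with hc'
  apply hL (l+1) c'
  · intro i
    by_cases h : (i : ℕ) = 0 <;> simp [hc', h, h0, hc, ← Fin.val_eq_zero_iff]
  · intro i j hij
    have hij' : (i : ℕ) < (j : ℕ) := hij
    by_cases h : (i : ℕ) = 0
    · have hj : (j : ℕ) ≠ 0 := by omega
      simp only [hc', h, dif_pos, hj, dif_neg, not_false_iff]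
      exact (Set.empty_ssubset).2 (hne _)
    · have hj : (j : ℕ) ≠ 0 := by omega
      simp only [hc', h, hj, dif_neg, not_false_iff]
      exact hmono _ _ (by simp [Fin.lt_def]; omega)

/-- a strict chain x ⊂ y ⊂ U of nonempty sets in E gives 3 ≤ d+1 -/
lemma my_chain3 {α : Type*} {E : Set (Set α)} {d : ℕ}
    (hL : ∀ (l : ℕ) (c : Fin (l+1) → Set α),
      (∀ i, c i ∈ E) → (∀ i j, i < j → c i ⊂ c j) → l ≤ d+1)
    (h0 : (∅ : Set α) ∈ E) {x y U : Set α} (hx : x ∈ E) (hy : y ∈ E) (hU : U ∈ E)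
    (hxy : x ⊂ y) (hyU : y ⊂ U) (hxne : x.Nonempty) : 3 ≤ d + 1 := by
  have h2 : (2 : ℕ) + 1 ≤ d + 1 := by
    apply my_chain_prepend hL h0 (![x, y, U]) ?_ ?_ ?_
    · intro i; fin_cases i <;> simpa
    · intro i j hij; fin_cases i <;> fin_cases j <;>
        first
          | exact absurd hij (by decide)
          | simpa using hxy
          | simpa using hyU
          | simpa using hxy.trans hyU
    · intro i; fin_cases i
      · simpa using hxne
      · simpa using hxne.mono hxy.subset
      · simpa using (hxne.mono hxy.subset).mono hyU.subset
  omega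

lemma my_pow_gap {k m : ℕ} (hk : 1 ≤ k) (hm : 1 ≤ m) : (k-1)^m + 1 ≤ k^m := by
  induction m with
  | zero => omega
  | succ n IH =>
    obtain ⟨j, rfl⟩ : ∃ j, k = j + 1 := ⟨k-1, by omega⟩
    simp only [Nat.add_sub_cancel] at IH ⊢
    rcases Nat.eq_zero_or_pos n with h | h
    · subst h; simp
    · have h1 := IH h
      calc j^(n+1) + 1 = j^n * j + 1 := by rw [pow_succ]
        _ ≤ (j^n + 1) * (j + 1) := by
            have h2 : (j^n + 1) * (j + 1) = j^n * j + (j^n + j + 1) := by ring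
            rw [h2]
            exact Nat.add_le_add_left (by omega) _
        _ ≤ (j+1)^n * (j+1) := Nat.mul_le_mul h1 le_rfl
        _ = (j+1)^(n+1) := (pow_succ _ _).symm

/-- cardinality of a finite family of sets is at most 1 + total size -/
lemma my_card_le_sum {α : Type*} [Fintype α] (F : Set (Set α)) :
    F.ncard ≤ 1 + ∑ᶠ e ∈ F, Set.ncard e := by
  classical
  have hfin : F.Finite := Set.toFinite F
  have hFc : F.ncard = hfin.toFinset.card := Set.ncard_eq_toFinset_card F hfin
  rw [finsum_mem_eq_finite_toFinset_sum _ hfin, hFc]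
  set Fs := hfin.toFinset with hFs
  rw [← Finset.card_filter_add_card_filter_not (p := fun e => e = (∅ : Set α)) (s := Fs)]
  have h1 : (Fs.filter (fun e => e = (∅ : Set α))).card ≤ 1 := by
    apply Finset.card_le_one.2
    intro a ha b hb
    simp only [Finset.mem_filter] at ha hb
    rw [ha.2, hb.2]
  have h2 : (Fs.filter (fun e => ¬ e = (∅ : Set α))).card ≤ ∑ e ∈ Fs, Set.ncard e := by
    calc (Fs.filter (fun e => ¬ e = (∅ : Set α))).card
        = ∑ e ∈ Fs.filter (fun e => ¬ e = (∅ : Set α)), 1 := by simp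
      _ ≤ ∑ e ∈ Fs.filter (fun e => ¬ e = (∅ : Set α)), Set.ncard e := by
          apply Finset.sum_le_sum
          intro e he
          simp only [Finset.mem_filter] at he
          exact (Set.ncard_pos (Set.toFinite e)).2 (Set.nonempty_iff_ne_empty.2 he.2)
      _ ≤ ∑ e ∈ Fs, Set.ncard e := Finset.sum_le_sum_of_subset (Finset.filter_subset _ _)
  omega

/-- double counting -/
lemma my_double_count {α : Type*} [Fintype α] (U : Set α) (F : Set (Set α))
    (hF : ∀ e ∈ F, e ⊆ U) (B : ℕ)
    (hv : ∀ v ∈ U, ({e ∈ F | v ∈ e} : Set (Set α)).ncard ≤ B) :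
    ∑ᶠ e ∈ F, Set.ncard e ≤ U.ncard * B := by
  classical
  have hfin : F.Finite := Set.toFinite F
  rw [finsum_mem_eq_finite_toFinset_sum _ hfin]
  set Fs := hfin.toFinset with hFs
  have h1 : ∀ e : Set α, Set.ncard e = ∑ v : α, if v ∈ e then 1 else 0 := by
    intro e
    rw [Set.ncard_eq_toFinset_card e (Set.toFinite e), ← Finset.card_filter]
    congr 1
    ext a; simp [Set.mem_setOf_eq]
  calc ∑ e ∈ Fs, Set.ncard e = ∑ e ∈ Fs, ∑ v : α, if v ∈ e then 1 else 0 := by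
        apply Finset.sum_congr rfl; intro e _; exact h1 e
    _ = ∑ v : α, ∑ e ∈ Fs, if v ∈ e then 1 else 0 := Finset.sum_comm
    _ = ∑ v : α, (Fs.filter (fun e => v ∈ e)).card := by
        apply Finset.sum_congr rfl; intro v _; rw [Finset.card_filter]
    _ ≤ ∑ v : α, if v ∈ U then B else 0 := by
        apply Finset.sum_le_sum
        intro v _
        by_cases hvU : v ∈ U
        · simp only [hvU, if_pos]
          have : ((Fs.filter (fun e => v ∈ e)) : Set (Set α)) = {e ∈ F | v ∈ e} := by
            ext e; simp [hFs, Set.mem_setOf_eq]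
          rw [← Set.ncard_coe_finset, this]
          exact hv v hvU
        · simp only [hvU, if_neg, not_false_iff]
          have : Fs.filter (fun e => v ∈ e) = ∅ := by
            apply Finset.filter_eq_empty_iff.2
            intro e he
            simp only [hFs, Set.Finite.mem_toFinset] at he
            exact fun hve => hvU (hF e he hve)
          simp [this]
    _ = ∑ v ∈ Finset.univ.filter (fun v => v ∈ U), B := by rw [Finset.sum_filter]
    _ = (Finset.univ.filter (fun v => v ∈ U)).card * B := by
        rw [Finset.sum_const, smul_eq_mul]
    _ = U.ncard * B := by
        congr 1
        rw [← Set.ncard_coe_finset]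
        congr 1
        ext a; simp

lemma my_aux {α : Type*} [Fintype α] :
    ∀ d : ℕ, 1 ≤ d → ∀ (U : Set α) (E : Set (Set α)),
      (∀ e ∈ E, e ⊆ U) → U ∈ E →
      (∀ a ∈ E, ∀ b ∈ E, a ∩ b ∈ E) → (⋂₀ E = ∅) →
      (∀ (l : ℕ) (c : Fin (l+1) → Set α),
        (∀ i, c i ∈ E) → (∀ i j, i < j → c i ⊂ c j) → l ≤ d+1) →
      ∑ᶠ e ∈ (E \ {U} : Set (Set α)), Set.ncard e ≤ U.ncard ^ d := by
  intro d
  induction d with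
  | zero => exact fun h => absurd h (by norm_num)
  | succ m IH =>
    intro _ U E hsub hUE hcl hred hL
    have hEne : E.Nonempty := ⟨U, hUE⟩
    have h0E : (∅ : Set α) ∈ E := by
      rw [← hred]; exact my_sInter_mem hcl (Set.toFinite E) hEne (subset_refl E)
    have hv : ∀ v ∈ U, ({e ∈ (E \ {U} : Set (Set α)) | v ∈ e}).ncard ≤ U.ncard ^ m := by
      intro v hvU
      rcases Nat.eq_zero_or_pos m with hm | hm
      · -- base case d = 1 : at most one proper edge contains v
        subst hm
        simp only [pow_zero]
        have key : ∀ x y : Set α, x ∈ E → y ∈ E → x ⊂ y → y ⊂ U → x.Nonempty → False := by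
          intro x y hx hy hxy hyU hxne
          have := my_chain3 hL h0E hx hy hUE hxy hyU hxne
          omega
        have hss : ({e ∈ (E \ {U} : Set (Set α)) | v ∈ e}).Subsingleton := by
          intro a ha b hb
          simp only [Set.mem_setOf_eq, Set.mem_diff, Set.mem_singleton_iff] at ha hb
          by_contra hab
          have hmE : a ∩ b ∈ E := hcl a ha.1.1 b hb.1.1
          have hvm : v ∈ a ∩ b := ⟨ha.2, hb.2⟩
          have haU : a ⊂ U := (Set.ssubset_iff_subset_ne).2 ⟨hsub a ha.1.1, ha.1.2⟩
          have hbU : b ⊂ U := (Set.ssubset_iff_subset_ne).2 ⟨hsub b hb.1.1, hb.1.2⟩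
          by_cases hab2 : a ⊆ b
          · exact key a b ha.1.1 hb.1.1 ((Set.ssubset_iff_subset_ne).2 ⟨hab2, hab⟩) hbU ⟨v, ha.2⟩
          · refine key (a ∩ b) a hmE ha.1.1
              ((Set.ssubset_iff_subset_ne).2 ⟨Set.inter_subset_left, ?_⟩) haU ⟨v, hvm⟩
            intro h
            exact hab2 (Set.inter_eq_left.1 h)
        rcases Set.eq_empty_or_nonempty ({e ∈ (E \ {U} : Set (Set α)) | v ∈ e}) with h | ⟨a, haa⟩
        · rw [h]; simp
        · calc ({e ∈ (E \ {U} : Set (Set α)) | v ∈ e}).ncard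
              ≤ ({a} : Set (Set α)).ncard :=
                Set.ncard_le_ncard (fun x hx => hss hx haa) (Set.toFinite _)
            _ = 1 := Set.ncard_singleton a
      · -- inductive case
        set Ev := {e ∈ E | v ∈ e} with hEv
        have hEvE : Ev ⊆ E := fun e he => he.1
        have hUEv : U ∈ Ev := ⟨hUE, hvU⟩
        have hEvne : Ev.Nonempty := ⟨U, hUEv⟩
        set M := ⋂₀ Ev with hM
        have hMEv' : ∀ e ∈ Ev, M ⊆ e := fun e he => Set.sInter_subset_of_mem he
        have hME : M ∈ E := my_sInter_mem hcl (Set.toFinite Ev) hEvne hEvE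
        have hvM : v ∈ M := Set.mem_sInter.2 (fun e he => he.2)
        have hMEv : M ∈ Ev := ⟨hME, hvM⟩
        have hMU : M ⊆ U := hMEv' U hUEv
        set E' := (fun e => e \ M) '' Ev with hE'
        set U' := U \ M with hU'
        have hrec : ∀ e ∈ Ev, (e \ M) ∪ M = e := fun e he => Set.diff_union_of_subset (hMEv' e he)
        have hinj : Set.InjOn (fun e => e \ M) Ev := by
          intro a ha b hb h
          simp only at h
          rw [← hrec a ha, ← hrec b hb, h]
        have hsub' : ∀ e' ∈ E', e' ⊆ U' := by
          rintro _ ⟨e, he, rfl⟩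
          exact Set.diff_subset_diff_left (hsub e (hEvE he))
        have hU'E' : U' ∈ E' := ⟨U, hUEv, rfl⟩
        have hcl' : ∀ a ∈ E', ∀ b ∈ E', a ∩ b ∈ E' := by
          rintro _ ⟨a, ha, rfl⟩ _ ⟨b, hb, rfl⟩
          refine ⟨a ∩ b, ⟨hcl a ha.1 b hb.1, ⟨ha.2, hb.2⟩⟩, ?_⟩
          ext x; simp only [Set.mem_diff, Set.mem_inter_iff]; tauto
        have hred' : ⋂₀ E' = ∅ := by
          apply Set.eq_empty_of_subset_empty
          intro x hx
          have h1 : (∅ : Set α) ∈ E' := ⟨M, hMEv, by simp⟩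
          exact hx _ h1
        have hL' : ∀ (l : ℕ) (c : Fin (l+1) → Set α),
            (∀ i, c i ∈ E') → (∀ i j, i < j → c i ⊂ c j) → l ≤ m+1 := by
          intro l c' hc'E hc'mono
          choose c hcEv hcc using hc'E
          have hceq : ∀ i, c i = c' i ∪ M := by
            intro i
            rw [← hcc i]
            exact (hrec _ (hcEv i)).symm
          have hmono : ∀ i j, i < j → c i ⊂ c j := by
            intro i j hij
            have h := hc'mono i j hij
            refine (Set.ssubset_iff_subset_ne).2 ⟨?_, ?_⟩
            · rw [hceq i, hceq j]; exact Set.union_subset_union_left M h.subset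
            · intro heq
              have : c' i = c' j := by rw [← hcc i, ← hcc j, heq]
              exact h.ne this
          have hne : ∀ i, (c i).Nonempty := fun i => ⟨v, (hcEv i).2⟩
          have := my_chain_prepend hL h0E c (fun i => (hcEv i).1) hmono hne
          omega
        have hIH := IH hm U' E' hsub' hU'E' hcl' hred' hL'
        have himg : (fun e => e \ M) '' (Ev \ {U}) = E' \ {U'} := by
          ext e'
          constructor
          · rintro ⟨e, ⟨heEv, heU⟩, rfl⟩
            refine ⟨⟨e, heEv, rfl⟩, ?_⟩
            intro h
            simp only [Set.mem_singleton_iff] at h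
            exact heU (by simp [hinj heEv hUEv h])
          · rintro ⟨⟨e, heEv, rfl⟩, hne⟩
            refine ⟨e, ⟨heEv, ?_⟩, rfl⟩
            intro h
            simp only [Set.mem_singleton_iff] at h
            exact hne (by simp [Set.mem_singleton_iff, h, hU'])
        have hcard : (Ev \ {U}).ncard = (E' \ {U'}).ncard := by
          rw [← himg, Set.ncard_image_of_injOn (hinj.mono Set.diff_subset)]
        have h1 : (E' \ {U'}).ncard ≤ 1 + ∑ᶠ e ∈ (E' \ {U'} : Set (Set α)), Set.ncard e :=
          my_card_le_sum _
        have hU'card : U'.ncard ≤ U.ncard - 1 := by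
          rw [hU', Set.ncard_diff hMU (Set.toFinite M)]
          have : 1 ≤ M.ncard := (Set.ncard_pos (Set.toFinite M)).2 ⟨v, hvM⟩
          omega
        have hUpos : 1 ≤ U.ncard := (Set.ncard_pos (Set.toFinite U)).2 ⟨v, hvU⟩
        have hgap := my_pow_gap hUpos hm
        have hmon : U'.ncard ^ m ≤ (U.ncard - 1) ^ m := Nat.pow_le_pow_left hU'card m
        have hset : {e ∈ (E \ {U} : Set (Set α)) | v ∈ e} = Ev \ {U} := by
          ext e
          simp only [Set.mem_setOf_eq, Set.mem_diff, Set.mem_singleton_iff, hEv]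
          tauto
        rw [hset]
        omega
    have hdc := my_double_count U (E \ {U}) (fun e he => hsub e he.1) (U.ncard ^ m) hv
    calc ∑ᶠ e ∈ (E \ {U} : Set (Set α)), Set.ncard e ≤ U.ncard * U.ncard ^ m := hdc
      _ = U.ncard ^ (m+1) := by ring

/-- Theorem 2: for an intersection-closed reduced hypergraph `H` on `n` vertices with
`L(H) ≤ d+1`, the edges other than `V` have total size at most `n^d`, and hence
`‖H‖ ≤ n^d + n`. -/
theorem stmt_7 {α : Type*} [Fintype α] (E : Set (Set α))
    (hcl : Set.univ ∈ E ∧ ∀ a ∈ E, ∀ b ∈ E, a ∩ b ∈ E)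
    (hred : ⋂₀ E = ∅) (d : ℕ) (hd : 0 < d)
    (hL : ∀ (l : ℕ) (c : Fin (l+1) → Set α),
      (∀ i, c i ∈ E) → (∀ i j, i < j → c i ⊂ c j) → l ≤ d+1) :
    (∑ᶠ e ∈ (E \ {Set.univ} : Set (Set α)), Set.ncard e) ≤ (Fintype.card α) ^ d ∧
    (∑ᶠ e ∈ E, Set.ncard e) ≤ (Fintype.card α) ^ d + Fintype.card α := by
  classical
  have huc : (Set.univ : Set α).ncard = Fintype.card α := by
    rw [Set.ncard_univ, Nat.card_eq_fintype_card]
  have h1 : ∑ᶠ e ∈ (E \ {Set.univ} : Set (Set α)), Set.ncard e ≤ (Fintype.card α) ^ d := by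
    have := my_aux d hd Set.univ E (fun e _ => Set.subset_univ e) hcl.1 hcl.2 hred hL
    rwa [huc] at this
  refine ⟨h1, ?_⟩
  have hfinE : E.Finite := Set.toFinite E
  have hfinE' : (E \ {Set.univ} : Set (Set α)).Finite := Set.toFinite _
  have hsplit : ∑ᶠ e ∈ E, Set.ncard e =
      Set.ncard (Set.univ : Set α) + ∑ᶠ e ∈ (E \ {Set.univ} : Set (Set α)), Set.ncard e := by
    rw [finsum_mem_eq_finite_toFinset_sum _ hfinE, finsum_mem_eq_finite_toFinset_sum _ hfinE']
    have herase : hfinE'.toFinset = hfinE.toFinset.erase Set.univ := by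
      ext e
      rw [Set.Finite.mem_toFinset, Finset.mem_erase, Set.Finite.mem_toFinset, Set.mem_diff,
        Set.mem_singleton_iff, and_comm]
    rw [herase]
    exact (Finset.add_sum_erase _ _ (hfinE.mem_toFinset.2 hcl.1)).symm
  rw [hsplit, huc]
  omega
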